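/- Let D be a division ring with center F and let N be a normal subgroup of D^* which is abelian. Then N ⊆ F. -/

import Mathlib

/-- Let `D` be a division ring with center `F` and `N` an abelian normal subgroup of
`D^*`. Then `N ⊆ F`. -/
theorem stmt_14 (D : Type*) [DivisionRing D]
    (N : Subgroup Dˣ) [N.Normal]
    (hab : ∀ a ∈ N, ∀ b ∈ N, a * b = b * a) :
    ∀ a ∈ N, ((a : Dˣ) : D) ∈ Subring.center D := by
  intro a ha
  rw [Subring.mem_center_iff]
  intro x
  by_contra h
  -- x ≠ 0 and x + 1 ≠ 0
  have hx : x ≠ 0 := by rintro rfl; simp at h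
  have hx1 : x + 1 ≠ 0 := by
    intro h1
    have : x = -1 := by
      have := eq_neg_of_add_eq_zero_left h1; simpa using this
    subst this
    simp [neg_mul, mul_neg] at h
  set u : Dˣ := Units.mk0 x hx with hu
  set v : Dˣ := Units.mk0 (x + 1) hx1 with hv
  have hc : u * a * u⁻¹ ∈ N := Subgroup.Normal.conj_mem ‹N.Normal› a ha u
  have hd : v * a * v⁻¹ ∈ N := Subgroup.Normal.conj_mem ‹N.Normal› a ha v
  set A : D := ((a : Dˣ) : D) with hA
  set C : D := ((u * a * u⁻¹ : Dˣ) : D) with hC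
  set E : D := ((v * a * v⁻¹ : Dˣ) : D) with hE
  -- commuting relations
  have hAC : A * C = C * A := by
    have := congrArg (fun t : Dˣ => (t : D)) (hab _ ha _ hc)
    exact (Units.val_mul a (u * a * u⁻¹)).symm.trans (this.trans (Units.val_mul (u * a * u⁻¹) a))
  have hAE : A * E = E * A := by
    have := congrArg (fun t : Dˣ => (t : D)) (hab _ ha _ hd)
    exact (Units.val_mul a (v * a * v⁻¹)).symm.trans (this.trans (Units.val_mul (v * a * v⁻¹) a))
  -- conjugation relations: x * A = C * x, (x+1) * A = E * (x+1)
  have hxu : (u : D) = x := rfl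
  have hxv : (v : D) = x + 1 := rfl
  have hcx : x * A = C * x := by
    rw [hC, Units.val_mul, Units.val_mul, Units.val_inv_eq_inv_val, hxu, ← hA,
      mul_assoc (x * A), inv_mul_cancel₀ hx, mul_one]
  have hex : (x + 1) * A = E * (x + 1) := by
    rw [hE, Units.val_mul, Units.val_mul, Units.val_inv_eq_inv_val, hxv, ← hA,
      mul_assoc ((x + 1) * A), inv_mul_cancel₀ hx1, mul_one]
  -- (C - E) * x = E - A
  have key : (C - E) * x = E - A := by
    have h1 : x * A + A = E * x + E := by
      calc x * A + A = (x + 1) * A := by noncomm_ring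
        _ = E * (x + 1) := hex
        _ = E * x + E := by noncomm_ring
    have h2 : C * x + A = E * x + E := by rw [← hcx]; exact h1
    have : C * x - E * x = E - A := by
      rw [sub_eq_iff_eq_add]
      calc C * x = E * x + E - A := by rw [← h2]; noncomm_ring
        _ = E - A + E * x := by noncomm_ring
    rw [sub_mul]; exact this
  by_cases hCE : C = E
  · -- then E = A, so (x+1) commutes with A, contradiction
    have hEA : E = A := by
      have hk := key
      rw [hCE, sub_self, zero_mul] at hk
      exact sub_eq_zero.mp hk.symm
    apply h
    rw [hEA] at hex
    have : x * A + A = A * x + A := by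
      calc x * A + A = (x + 1) * A := by noncomm_ring
        _ = A * (x + 1) := hex
        _ = A * x + A := by noncomm_ring
    exact add_right_cancel this
  · have hne : C - E ≠ 0 := sub_ne_zero.mpr hCE
    -- x = (C - E)⁻¹ * (E - A), and A commutes with the RHS
    have hxeq : x = (C - E)⁻¹ * (E - A) := by
      rw [← key, ← mul_assoc, inv_mul_cancel₀ hne, one_mul]
    have hAsub : Commute A (C - E) := by
      unfold Commute SemiconjBy
      rw [mul_sub, sub_mul, hAC, hAE]
    have hAinv : Commute A (C - E)⁻¹ := hAsub.inv_right₀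
    apply h
    rw [hxeq]
    calc ((C - E)⁻¹ * (E - A)) * A = (C - E)⁻¹ * ((E - A) * A) := by rw [mul_assoc]
      _ = (C - E)⁻¹ * (A * (E - A)) := by rw [sub_mul, mul_sub, mul_sub, ← hAE, mul_sub]
      _ = ((C - E)⁻¹ * A) * (E - A) := by rw [mul_assoc]
      _ = (A * (C - E)⁻¹) * (E - A) := by rw [hAinv.eq]
      _ = A * ((C - E)⁻¹ * (E - A)) := by rw [mul_assoc]
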